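/- For all integers c, g ≥ 2 and all sufficiently large natural numbers n, there exists a set Z ⊆ (ZMod 2)^n such that: every nonempty subset of Z with fewer than g elements is linearly independent over ZMod 2 (so the simple binary matroid represented by Z has girth at least g); every linear subspace of (ZMod 2)^n of codimension c − 1 has nonempty intersection with Z (so the critical number of Z is at least c); and wt(z) ≥ n − 2cg for every z ∈ Z. -/

import Mathlib

def hWt {m : ℕ} (x : Fin m → ZMod 2) : ℕ :=
  (Finset.univ.filter fun i => x i ≠ 0).card

namespace S7
open Finset

lemma zmod2_em (a : ZMod 2) : a = 0 ∨ a = 1 := by revert a; decide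

lemma add_self_eq_zero' {M : Type*} [AddCommGroup M] [Module (ZMod 2) M] (v : M) :
    v + v = 0 := by
  have h2 : ((1 : ZMod 2) + 1) = 0 := by decide
  calc v + v = (1 : ZMod 2) • v + (1 : ZMod 2) • v := by rw [one_smul]
    _ = ((1 : ZMod 2) + 1) • v := by rw [add_smul]
    _ = 0 := by rw [h2, zero_smul]

lemma eq_of_add_eq_zero' {M : Type*} [AddCommGroup M] [Module (ZMod 2) M] {a b : M}
    (h : a + b = 0) : a = b := by
  have := congrArg (· + b) h
  simpa [add_assoc, add_self_eq_zero'] using this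

lemma even_nsmul_eq_zero {M : Type*} [AddCommGroup M] [Module (ZMod 2) M] {k : ℕ}
    (hk : k % 2 = 0) (v : M) : k • v = 0 := by
  obtain ⟨t, rfl⟩ : ∃ t, k = 2 * t := ⟨k / 2, by omega⟩
  rw [mul_nsmul]
  simp [two_nsmul, add_self_eq_zero']

variable {n : ℕ}

/-- indicator vector of a finset -/
def vec (S : Finset (Fin n)) : Fin n → ZMod 2 := ∑ i ∈ S, Pi.single i 1

lemma vec_apply (S : Finset (Fin n)) (j : Fin n) :
    vec S j = if j ∈ S then 1 else 0 := by
  classical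
  simp only [vec, Finset.sum_apply, Pi.single_apply]
  simp [Finset.sum_ite_eq S j (fun _ => (1 : ZMod 2))]

lemma vec_inj {S S' : Finset (Fin n)} (h : vec S = vec S') : S = S' := by
  ext j
  have := congrFun h j
  rw [vec_apply, vec_apply] at this
  by_cases hj : j ∈ S <;> by_cases hj' : j ∈ S' <;> simp_all

lemma vec_univ : vec (univ : Finset (Fin n)) = 1 := by
  have := Finset.univ_sum_single (fun _ : Fin n => (1 : ZMod 2))
  rw [vec]; exact this

/-- subset-of-basis representation: any element of the span is a sum of at most
`finrank` many of the generators. -/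
lemma exists_small_rep {M : Type*} [AddCommGroup M] [Module (ZMod 2) M]
    [Module.Finite (ZMod 2) M] {ι : Type*} [Fintype ι] [DecidableEq ι]
    (f : ι → M) (x : M) (hx : x ∈ Submodule.span (ZMod 2) (Set.range f)) :
    ∃ T : Finset ι, T.card ≤ Module.finrank (ZMod 2) M ∧ ∑ i ∈ T, f i = x := by
  classical
  obtain ⟨cc, hcc⟩ := Finsupp.mem_span_range_iff_exists_finsupp.mp hx
  have h0 : ∑ i ∈ cc.support, f i = x := by
    rw [← hcc, Finsupp.sum]
    refine Finset.sum_congr rfl (fun i hi => ?_)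
    rcases zmod2_em (cc i) with h | h
    · exact absurd h (Finsupp.mem_support_iff.mp hi)
    · rw [h, one_smul]
  have hne : (Finset.univ.filter (fun T : Finset ι => ∑ i ∈ T, f i = x)).Nonempty :=
    ⟨cc.support, by simp [h0]⟩
  obtain ⟨T, hTmem, hTmin⟩ := Finset.exists_min_image _ Finset.card hne
  have hTsum : ∑ i ∈ T, f i = x := by simpa using hTmem
  refine ⟨T, ?_, hTsum⟩
  by_contra hbig
  push_neg at hbig
  have hnli : ¬ LinearIndependent (ZMod 2) (fun i : {i // i ∈ T} => f i) := by
    intro hli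
    have := hli.fintype_card_le_finrank
    rw [Fintype.card_coe] at this
    omega
  obtain ⟨gg, hgsum, i₀, hgi₀⟩ := Fintype.not_linearIndependent_iff.mp hnli
  set U : Finset ι := (T.attach.filter (fun i => gg i = 1)).image Subtype.val with hU
  have hUsub : U ⊆ T := by
    intro a ha
    simp only [hU, Finset.mem_image, Finset.mem_filter] at ha
    obtain ⟨b, _, rfl⟩ := ha
    exact b.2
  have hUsum : ∑ i ∈ U, f i = 0 := by
    rw [hU, Finset.sum_image (by intro a _ b _ hab; exact Subtype.ext hab)]
    rw [← hgsum]
    rw [Finset.sum_filter]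
    rw [← Finset.univ_eq_attach]
    refine Finset.sum_congr rfl (fun i _ => ?_)
    rcases zmod2_em (gg i) with h | h <;> simp [h]
  have hUne : U.Nonempty := by
    refine ⟨i₀.val, ?_⟩
    simp only [hU, Finset.mem_image, Finset.mem_filter]
    refine ⟨i₀, ⟨Finset.mem_attach _ _, ?_⟩, rfl⟩
    rcases zmod2_em (gg i₀) with h | h
    · exact absurd h hgi₀
    · exact h
  have hT'sum : ∑ i ∈ T \ U, f i = x := by
    have := Finset.sum_sdiff (f := f) hUsub
    rw [hUsum, add_zero] at this
    rw [this, hTsum]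
  have hlt : (T \ U).card < T.card := by
    rw [Finset.card_sdiff_of_subset hUsub]
    have h1 : 1 ≤ U.card := Finset.card_pos.mpr hUne
    have h2 : U.card ≤ T.card := Finset.card_le_card hUsub
    omega
  have := hTmin (T \ U) (by simp [hT'sum])
  omega

/-- linear independence from: no nonempty subset sums to zero. -/
lemma li_of_sums {S : Finset (Fin n → ZMod 2)}
    (h : ∀ Q ⊆ S, Q.Nonempty → ∑ x ∈ Q, x ≠ 0) :
    LinearIndependent (ZMod 2) (fun x : {x : Fin n → ZMod 2 // x ∈ S} => (x : Fin n → ZMod 2)) := by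
  classical
  rw [Fintype.linearIndependent_iff]
  intro gg hgg
  by_contra hne
  push_neg at hne
  obtain ⟨i₀, hi₀⟩ := hne
  set Q : Finset (Fin n → ZMod 2) :=
    (S.attach.filter (fun i => gg i = 1)).image Subtype.val with hQ
  have hQsub : Q ⊆ S := by
    intro a ha
    simp only [hQ, Finset.mem_image, Finset.mem_filter] at ha
    obtain ⟨b, _, rfl⟩ := ha
    exact b.2
  have hQne : Q.Nonempty := by
    refine ⟨i₀.val, ?_⟩
    simp only [hQ, Finset.mem_image, Finset.mem_filter]
    refine ⟨i₀, ⟨Finset.mem_attach _ _, ?_⟩, rfl⟩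
    rcases zmod2_em (gg i₀) with h' | h'
    · exact absurd h' hi₀
    · exact h'
  refine h Q hQsub hQne ?_
  rw [hQ, Finset.sum_image (by intro a _ b _ hab; exact Subtype.ext hab)]
  rw [← hgg]
  rw [Finset.sum_filter]
  rw [← Finset.univ_eq_attach]
  refine Finset.sum_congr rfl (fun i _ => ?_)
  rcases zmod2_em (gg i) with h' | h' <;> simp [h']

open Finset

/-- two-term binomial lower bound, subtraction-free form. -/
lemma two_term_binom (x y : ℕ) : ∀ m : ℕ, x^(m+1) + (m+1) * x^m * y ≤ (x+y)^(m+1) := by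
  intro m
  induction m with
  | zero => simp [pow_succ]
  | succ k ih =>
      have h1 : (x+y)^(k+1+1) = (x+y) * (x+y)^(k+1) := by ring
      have h2 : (x+y) * (x^(k+1) + (k+1) * x^k * y) ≤ (x+y) * (x+y)^(k+1) :=
        Nat.mul_le_mul_left _ ih
      have h3 : x^(k+1+1) + (k+1+1) * x^(k+1) * y ≤ (x+y) * (x^(k+1) + (k+1) * x^k * y) := by
        have e : (x+y) * (x^(k+1) + (k+1) * x^k * y)
            = x^(k+2) + (k+1) * x^(k+1) * y + x^(k+1) * y + (k+1) * (x^k * y * y) := by ring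
        have e2 : x^(k+1+1) + (k+1+1) * x^(k+1) * y
            = x^(k+2) + (k+1) * x^(k+1) * y + x^(k+1) * y := by ring
        omega
      calc x^(k+1+1) + (k+1+1) * x^(k+1) * y ≤ _ := h3
        _ ≤ _ := h2
        _ = (x+y)^(k+1+1) := h1.symm

/-- if `x + y ≤ m * y` then `2 x^m ≤ (x+y)^m` (for `m ≥ 1`). -/
lemma two_pow_le {x y m : ℕ} (hm : 1 ≤ m) (h : x + y ≤ m * y) : 2 * x^m ≤ (x+y)^m := by
  obtain ⟨k, rfl⟩ : ∃ k, m = k + 1 := ⟨m - 1, by omega⟩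
  have h1 := two_term_binom x y k
  have h2 : x^(k+1) ≤ x^k * ((k+1) * y) := by
    calc x^(k+1) = x^k * x := by ring
      _ ≤ x^k * (x + y) := Nat.mul_le_mul_left _ (by omega)
      _ ≤ x^k * ((k+1) * y) := Nat.mul_le_mul_left _ h
  have : 2 * x^(k+1) = x^(k+1) + x^(k+1) := by ring
  have h3 : (k+1) * x^k * y = x^k * ((k+1) * y) := by ring
  omega

/-- `(n+1-k)^k ≤ n.descFactorial k` when `k ≤ n`. -/
lemma pow_le_descFactorial {n : ℕ} : ∀ {k : ℕ}, k ≤ n → (n + 1 - k)^k ≤ n.descFactorial k := by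
  intro k
  induction k with
  | zero => simp
  | succ t ih =>
      intro hk
      rw [Nat.descFactorial_succ]
      have h1 : (n + 1 - (t+1))^(t+1) = (n - t) * (n + 1 - (t+1))^t := by
        have : n + 1 - (t+1) = n - t := by omega
        rw [this]; ring
      rw [h1]
      refine Nat.mul_le_mul_left _ ?_
      calc (n + 1 - (t+1))^t ≤ (n + 1 - t)^t := Nat.pow_le_pow_left (by omega) t
        _ ≤ n.descFactorial t := ih (by omega)

lemma lin_le_two_pow {s k : ℕ} (hk : 4*s + 4 ≤ k) : s * (k+1) ≤ 2^k := by
  induction k with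
  | zero => omega
  | succ t ih =>
      by_cases ht : 4*s + 4 ≤ t
      · have h1 := ih ht
        have hs : s ≤ 2^t := by
          have : s < 2^s := (Nat.lt_two_pow_self (n := s))
          have : (2:ℕ)^s ≤ 2^t := Nat.pow_le_pow_right (by norm_num) (by omega)
          omega
        calc s * (t+1+1) = s * (t+1) + s := by ring
          _ ≤ 2^t + 2^t := by omega
          _ = 2^(t+1) := by ring
      · -- base case: t + 1 = 4s + 4
        have hteq : t + 1 = 4*s + 4 := by omega
        have hs1 : s ≤ 2^s := Nat.le_of_lt ((Nat.lt_two_pow_self (n := s)))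
        have hs2 : 4*s + 4 + 1 ≤ 8 * (s + 1) := by omega
        have hs3 : s + 1 ≤ 2^s * 2 := by
          have := (Nat.lt_two_pow_self (n := s))
          omega
        have h4 : s * (4*s+4+1) ≤ 2^s * (8 * (s+1)) :=
          Nat.mul_le_mul hs1 hs2
        have h5 : 2^s * (8 * (s+1)) ≤ 2^s * (8 * (2^s * 2)) :=
          Nat.mul_le_mul_left _ (Nat.mul_le_mul_left _ hs3)
        have h6 : 2^s * (8 * (2^s * 2)) = 16 * (2^s * 2^s) := by ring
        have h7 : (16:ℕ) * (2^s * 2^s) ≤ 2^(4*s+4) := by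
          have e1 : (2:ℕ)^(4*s+4) = 16 * ((2^s * 2^s) * (2^s * 2^s)) := by
            rw [show (4:ℕ)*s + 4 = s + s + s + s + 4 by omega]
            rw [pow_add, pow_add, pow_add, pow_add]
            norm_num; ring
          have e2 : (2:ℕ)^s * 2^s ≤ (2^s * 2^s) * (2^s * 2^s) :=
            Nat.le_mul_of_pos_left _ (by positivity)
          omega
        rw [hteq]
        omega
      
lemma poly_le_two_pow (K a : ℕ) : ∃ N, ∀ n ≥ N, K * (n+1)^a ≤ 2^n := by
  refine ⟨2^(4*(a + K + 1) + 4), fun n hn => ?_⟩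
  have hn0 : n ≠ 0 := by
    intro h
    rw [h] at hn
    have : (1:ℕ) ≤ 2^(4*(a+K+1)+4) := Nat.one_le_two_pow
    have : (2:ℕ)^(4*(a+K+1)+4) > 1 := by
      have : (2:ℕ)^1 ≤ 2^(4*(a+K+1)+4) := Nat.pow_le_pow_right (by norm_num) (by omega)
      omega
    omega
  set k := Nat.log 2 n with hk
  have hklb : 4*(a + K + 1) + 4 ≤ k :=
    (Nat.le_log_iff_pow_le (by norm_num) hn0).mpr hn
  have hn1 : n + 1 ≤ 2^(k+1) := Nat.lt_pow_succ_log_self (by norm_num) n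
  have hnk : 2^k ≤ n := Nat.pow_log_le_self 2 hn0
  have hK : K ≤ 2^k := by
    have h1 : K < 2^K := (Nat.lt_two_pow_self (n := K))
    have h2 : (2:ℕ)^K ≤ 2^k := Nat.pow_le_pow_right (by norm_num) (by omega)
    omega
  have h3 : K * (n+1)^a ≤ 2^k * (2^(k+1))^a := by
    exact Nat.mul_le_mul hK (Nat.pow_le_pow_left hn1 a)
  have h4 : (2:ℕ)^k * (2^(k+1))^a = 2^(k + (k+1)*a) := by
    rw [← pow_mul, ← pow_add]
  have h5 : k + (k+1)*a ≤ n := by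
    have h6 : k + (k+1)*a ≤ (a+1) * (k+1) := by ring_nf; omega
    have h7 : (a+1) * (k+1) ≤ 2^k := lin_le_two_pow (by omega)
    omega
  calc K * (n+1)^a ≤ 2^k * (2^(k+1))^a := h3
    _ = 2^(k + (k+1)*a) := h4
    _ ≤ 2^n := Nat.pow_le_pow_right (by norm_num) h5


/-! ## The construction -/

section Core
open scoped Classical

variable (c g n : ℕ)

def pp : ℕ := 2*c*(g-1)
def mm : ℕ := 2^((c+1) * pp c g)
def LL : ℕ := mm c g * (2*c*n)

abbrev Cores := {T : Finset (Fin n) // T.card ≤ c - 1}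
abbrev Idx := Cores c n × Fin (LL c g n)

def PadsF : Finset (Finset (Fin n)) := Finset.univ.powersetCard (pp c g)

noncomputable def OmegaF : Finset (Idx c g n → Finset (Fin n)) :=
  Fintype.piFinset (fun _ => PadsF c g n)

def svec (F : Idx c g n → Finset (Fin n)) (i : Idx c g n) : Fin n → ZMod 2 :=
  vec i.1.1 + vec (F i)

def zOf (F : Idx c g n → Finset (Fin n)) (i : Idx c g n) : Fin n → ZMod 2 :=
  1 + svec c g n F i

noncomputable def BadG : Finset (Idx c g n → Finset (Fin n)) :=
  (OmegaF c g n).filter (fun F => ∃ J : Finset (Idx c g n),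
    2 ≤ J.card ∧ J.card < g ∧ ∑ i ∈ J, svec c g n F i = 0)

noncomputable def BadH : Finset (Idx c g n → Finset (Fin n)) :=
  (OmegaF c g n).filter (fun F => ∃ TA : Cores c n × Finset (Fin n),
    n ≤ TA.2.card * 2^(c-1) ∧ ∀ j : Fin (LL c g n), ¬ (F (TA.1, j) ⊆ TA.2))

lemma card_PadsF : (PadsF c g n).card = n.choose (pp c g) := by
  simp [PadsF]

lemma card_OmegaF :
    (OmegaF c g n).card = (n.choose (pp c g)) ^ (Fintype.card (Idx c g n)) := by
  rw [OmegaF, Fintype.card_piFinset]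
  simp [card_PadsF]

lemma card_E {J : Finset (Idx c g n)} (hJ : J.Nonempty) :
    ((OmegaF c g n).filter (fun F => ∑ i ∈ J, svec c g n F i = 0)).card
      ≤ (n.choose (pp c g)) ^ (Fintype.card (Idx c g n) - 1) := by
  obtain ⟨i₀, hi₀⟩ := hJ
  have hstep : ((OmegaF c g n).filter (fun F => ∑ i ∈ J, svec c g n F i = 0)).card
      ≤ (Fintype.piFinset (fun _ : {i : Idx c g n // i ≠ i₀} => PadsF c g n)).card := by
    refine Finset.card_le_card_of_injOn (fun F => (fun i => F i.1)) ?_ ?_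
    · intro F hF
      rw [Finset.mem_coe, Finset.mem_filter] at hF
      rw [Finset.mem_coe, Fintype.mem_piFinset]
      intro a
      exact (Fintype.mem_piFinset.mp hF.1) a.1
    · intro F₁ hF₁ F₂ hF₂ heq
      simp only [Finset.coe_filter, Set.mem_setOf_eq] at hF₁ hF₂
      have hoff : ∀ i : Idx c g n, i ≠ i₀ → F₁ i = F₂ i := by
        intro i hi
        exact congrFun heq ⟨i, hi⟩
      have hsum₁ := hF₁.2
      have hsum₂ := hF₂.2
      have herase : ∑ i ∈ J.erase i₀, svec c g n F₁ i = ∑ i ∈ J.erase i₀, svec c g n F₂ i := by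
        refine Finset.sum_congr rfl (fun i hi => ?_)
        have : F₁ i = F₂ i := hoff i (Finset.ne_of_mem_erase hi)
        simp [svec, this]
      have he₁ : ∑ i ∈ J.erase i₀, svec c g n F₁ i + svec c g n F₁ i₀ = 0 := by
        rw [Finset.sum_erase_add _ _ hi₀]; exact hsum₁
      have he₂ : ∑ i ∈ J.erase i₀, svec c g n F₂ i + svec c g n F₂ i₀ = 0 := by
        rw [Finset.sum_erase_add _ _ hi₀]; exact hsum₂
      have h₁ : svec c g n F₁ i₀ = svec c g n F₂ i₀ := by
        have a₁ := eq_of_add_eq_zero' he₁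
        have a₂ := eq_of_add_eq_zero' he₂
        rw [← a₁, ← a₂, herase]
      have hvec : vec (F₁ i₀) = vec (F₂ i₀) := by
        have := h₁
        unfold svec at this
        exact add_left_cancel this
      have hi₀eq : F₁ i₀ = F₂ i₀ := vec_inj hvec
      funext i
      by_cases hii : i = i₀
      · rw [hii]; exact hi₀eq
      · exact hoff i hii
  refine hstep.trans ?_
  rw [Fintype.card_piFinset]
  rw [Finset.prod_const, card_PadsF]
  have hceq : Fintype.card {i : Idx c g n // i ≠ i₀} = Fintype.card (Idx c g n) - 1 := by
    rw [Fintype.card_subtype_compl, Fintype.card_subtype_eq]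
  rw [Finset.card_univ, hceq]

lemma NI_pos (hL : 1 ≤ LL c g n) : 1 ≤ Fintype.card (Idx c g n) := by
  haveI : Nonempty (Idx c g n) := ⟨⟨⟨∅, by simp⟩, ⟨0, hL⟩⟩⟩
  exact Fintype.card_pos

lemma badG_card (hL : 1 ≤ LL c g n) :
    (BadG c g n).card ≤ g * (Fintype.card (Idx c g n))^(g-1)
      * (n.choose (pp c g)) ^ (Fintype.card (Idx c g n) - 1) := by
  set NI := Fintype.card (Idx c g n)
  have hNI : 1 ≤ NI := NI_pos c g n hL
  set cands : Finset (Finset (Idx c g n)) :=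
    Finset.univ.filter (fun J => 2 ≤ J.card ∧ J.card < g) with hcands
  have hsub : BadG c g n ⊆ cands.biUnion
      (fun J => (OmegaF c g n).filter (fun F => ∑ i ∈ J, svec c g n F i = 0)) := by
    intro F hF
    rw [BadG, Finset.mem_filter] at hF
    obtain ⟨hFΩ, J, hJ2, hJg, hJsum⟩ := hF
    rw [Finset.mem_biUnion]
    exact ⟨J, by simp [hcands, hJ2, hJg], by simp [Finset.mem_filter, hFΩ, hJsum]⟩
  have hcc : cands.card ≤ g * NI^(g-1) := by
    have hsub2 : cands ⊆ (Finset.Ico 2 g).biUnion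
        (fun r => Finset.univ.powersetCard r) := by
      intro J hJ
      rw [hcands, Finset.mem_filter] at hJ
      rw [Finset.mem_biUnion]
      exact ⟨J.card, by simp [Finset.mem_Ico, hJ.2.1, hJ.2.2],
        by rw [Finset.mem_powersetCard]; exact ⟨Finset.subset_univ _, rfl⟩⟩
    refine (Finset.card_le_card hsub2).trans ?_
    refine (Finset.card_biUnion_le).trans ?_
    have hterm : ∀ r ∈ Finset.Ico 2 g,
        (Finset.univ.powersetCard r : Finset (Finset (Idx c g n))).card ≤ NI^(g-1) := by
      intro r hr
      rw [Finset.mem_Ico] at hr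
      rw [Finset.card_powersetCard, Finset.card_univ]
      calc NI.choose r ≤ NI^r := Nat.choose_le_pow NI r
        _ ≤ NI^(g-1) := Nat.pow_le_pow_right hNI (by omega)
    calc ∑ r ∈ Finset.Ico 2 g, (Finset.univ.powersetCard r : Finset (Finset (Idx c g n))).card
        ≤ ∑ _r ∈ Finset.Ico 2 g, NI^(g-1) := Finset.sum_le_sum hterm
      _ = (Finset.Ico 2 g).card * NI^(g-1) := by rw [Finset.sum_const, smul_eq_mul]
      _ ≤ g * NI^(g-1) := by
          refine Nat.mul_le_mul_right _ ?_
          rw [Nat.card_Ico]; omega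
  calc (BadG c g n).card ≤ _ := Finset.card_le_card hsub
    _ ≤ ∑ J ∈ cands, ((OmegaF c g n).filter
          (fun F => ∑ i ∈ J, svec c g n F i = 0)).card := Finset.card_biUnion_le
    _ ≤ ∑ J ∈ cands, (n.choose (pp c g)) ^ (NI - 1) := by
        refine Finset.sum_le_sum (fun J hJ => ?_)
        refine card_E c g n ?_
        rw [hcands, Finset.mem_filter] at hJ
        rw [← Finset.card_pos]; omega
    _ = cands.card * (n.choose (pp c g)) ^ (NI - 1) := by rw [Finset.sum_const, smul_eq_mul]
    _ ≤ g * NI^(g-1) * (n.choose (pp c g)) ^ (NI - 1) := Nat.mul_le_mul_right _ hcc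

lemma card_idx_fiber (T : Cores c n) :
    (Finset.univ.filter (fun i : Idx c g n => i.1 = T)).card = LL c g n := by
  have : Finset.univ.filter (fun i : Idx c g n => i.1 = T)
      = ({T} : Finset (Cores c n)) ×ˢ (Finset.univ : Finset (Fin (LL c g n))) := by
    ext ⟨a, b⟩
    simp [Finset.mem_product, eq_comm]
  rw [this, Finset.card_product]
  simp

lemma card_badH_pair (T : Cores c n) (A : Finset (Fin n)) :
    ((OmegaF c g n).filter (fun F => ∀ j : Fin (LL c g n), ¬ (F (T, j) ⊆ A))).card
      ≤ ((PadsF c g n).filter (fun R => ¬ R ⊆ A)).card ^ (LL c g n)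
        * (n.choose (pp c g)) ^ (Fintype.card (Idx c g n) - LL c g n) := by
  have hsub : (OmegaF c g n).filter (fun F => ∀ j : Fin (LL c g n), ¬ (F (T, j) ⊆ A))
      ⊆ Fintype.piFinset (fun i : Idx c g n =>
          if i.1 = T then (PadsF c g n).filter (fun R => ¬ R ⊆ A) else PadsF c g n) := by
    intro F hF
    rw [Finset.mem_filter] at hF
    rw [Fintype.mem_piFinset]
    intro a
    by_cases ha : a.1 = T
    · rw [if_pos ha, Finset.mem_filter]
      refine ⟨Fintype.mem_piFinset.mp hF.1 a, ?_⟩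
      have := hF.2 a.2
      have haa : a = (T, a.2) := by
        rw [← ha]
      rw [haa]
      exact hF.2 a.2
    · rw [if_neg ha]
      exact Fintype.mem_piFinset.mp hF.1 a
  refine (Finset.card_le_card hsub).trans ?_
  rw [Fintype.card_piFinset]
  simp only [apply_ite Finset.card]
  rw [Finset.prod_ite (fun _ => ((PadsF c g n).filter (fun R => ¬ R ⊆ A)).card)
    (fun _ => (PadsF c g n).card)]
  rw [Finset.prod_const, Finset.prod_const, card_PadsF]
  rw [card_idx_fiber]
  have h := Finset.card_filter_add_card_filter_not
    (s := (Finset.univ : Finset (Idx c g n))) (p := fun i => i.1 = T)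
  rw [card_idx_fiber, Finset.card_univ] at h
  have heq : (Finset.univ.filter (fun i : Idx c g n => ¬ i.1 = T)).card
      = Fintype.card (Idx c g n) - LL c g n := by omega
  rw [heq]

lemma G0_eq (A : Finset (Fin n)) :
    ((PadsF c g n).filter (fun R => R ⊆ A)).card = A.card.choose (pp c g) := by
  have : (PadsF c g n).filter (fun R => R ⊆ A) = A.powersetCard (pp c g) := by
    ext R
    simp only [PadsF, Finset.mem_filter, Finset.mem_powersetCard]
    constructor
    · rintro ⟨⟨_, h2⟩, h3⟩; exact ⟨h3, h2⟩
    · rintro ⟨h1, h2⟩; exact ⟨⟨Finset.subset_univ _, h2⟩, h1⟩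
  rw [this, Finset.card_powersetCard]

lemma ratio_le {A : Finset (Fin n)} (hc1 : 1 ≤ c)
    (hA : n ≤ A.card * 2^(c-1)) (hnp : 2^(c+1) * pp c g ≤ n) :
    n.choose (pp c g) ≤ mm c g * (A.card.choose (pp c g)) := by
  set p := pp c g with hp
  set x := (2:ℕ)^(c-1) with hx
  have hx0 : 0 < x := by positivity
  have hexp : (2:ℕ)^(c+1) = 4 * x := by
    obtain ⟨k, rfl⟩ := Nat.exists_eq_add_of_le hc1
    rw [hx]
    have e1 : 1 + k - 1 = k := by omega
    have e2 : 1 + k + 1 = k + 2 := by omega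
    rw [e1, e2, pow_add]
    ring
  have hnp' : 4 * x * p ≤ n := by rw [← hexp]; exact hnp
  have hAp : p ≤ A.card := by
    have h1 : (4*p) * x ≤ A.card * x := by
      calc (4*p) * x = 4 * x * p := by ring
        _ ≤ n := hnp'
        _ ≤ A.card * x := hA
    have := Nat.le_of_mul_le_mul_right h1 hx0
    omega
  have key : n ≤ 2^(c+1) * (A.card + 1 - p) := by
    obtain ⟨d, hd⟩ := Nat.exists_eq_add_of_le hAp
    have hd1 : A.card + 1 - p = d + 1 := by omega
    rw [hexp, hd1]
    have hu : x * A.card = x * p + x * d := by rw [hd]; ring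
    have hgoal : 4 * x * (d + 1) = 4 * (x * d) + 4 * x := by ring
    rw [hgoal]
    have hA2 : n ≤ x * p + x * d := by
      calc n ≤ A.card * x := hA
        _ = x * A.card := by ring
        _ = x * p + x * d := hu
    have hv : 4 * (x * p) ≤ n := by
      calc 4 * (x * p) = 4 * x * p := by ring
        _ ≤ n := hnp'
    omega
  have h1 : Nat.factorial p * n.choose p = n.descFactorial p :=
    (Nat.descFactorial_eq_factorial_mul_choose n p).symm
  have h2 : n.descFactorial p ≤ n^p := Nat.descFactorial_le_pow n p
  have h3 : n^p ≤ (2^(c+1))^p * (A.card + 1 - p)^p := by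
    rw [← mul_pow]
    exact Nat.pow_le_pow_left key p
  have h4 : (A.card + 1 - p)^p ≤ A.card.descFactorial p := pow_le_descFactorial hAp
  have h5 : A.card.descFactorial p = Nat.factorial p * A.card.choose p :=
    Nat.descFactorial_eq_factorial_mul_choose _ _
  have hmm : mm c g = (2^(c+1))^p := by rw [mm, pow_mul]
  have hmain : Nat.factorial p * n.choose p
      ≤ Nat.factorial p * (mm c g * A.card.choose p) := by
    calc Nat.factorial p * n.choose p = n.descFactorial p := h1
      _ ≤ n^p := h2
      _ ≤ (2^(c+1))^p * (A.card + 1 - p)^p := h3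
      _ ≤ (2^(c+1))^p * A.card.descFactorial p := Nat.mul_le_mul_left _ h4
      _ = (2^(c+1))^p * (Nat.factorial p * A.card.choose p) := by rw [h5]
      _ = Nat.factorial p * ((2^(c+1))^p * A.card.choose p) := by ring
      _ = Nat.factorial p * (mm c g * A.card.choose p) := by rw [← hmm]
  exact Nat.le_of_mul_le_mul_left hmain (Nat.factorial_pos p)

lemma cores_pos : 1 ≤ Fintype.card (Cores c n) := by
  haveI : Nonempty (Cores c n) := ⟨⟨∅, by simp⟩⟩
  exact Fintype.card_pos

lemma NI_eq : Fintype.card (Idx c g n) = Fintype.card (Cores c n) * LL c g n := by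
  rw [Fintype.card_prod, Fintype.card_fin]

lemma badH_card (hc1 : 1 ≤ c) (hnp : 2^(c+1) * pp c g ≤ n) :
    (BadH c g n).card * 2^(2*c*n)
      ≤ (Fintype.card (Cores c n) * 2^n)
        * (n.choose (pp c g)) ^ (Fintype.card (Idx c g n)) := by
  set P := n.choose (pp c g) with hP
  set NI := Fintype.card (Idx c g n) with hNI
  set pairs : Finset (Cores c n × Finset (Fin n)) :=
    Finset.univ.filter (fun TA => n ≤ TA.2.card * 2^(c-1)) with hpairs
  have hsub : BadH c g n ⊆ pairs.biUnion (fun TA =>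
      (OmegaF c g n).filter (fun F => ∀ j : Fin (LL c g n), ¬ (F (TA.1, j) ⊆ TA.2))) := by
    intro F hF
    rw [BadH, Finset.mem_filter] at hF
    obtain ⟨hFΩ, TA, hTA1, hTA2⟩ := hF
    rw [Finset.mem_biUnion]
    refine ⟨TA, by simp [hpairs, hTA1], ?_⟩
    rw [Finset.mem_filter]
    exact ⟨hFΩ, hTA2⟩
  have hLNI : LL c g n ≤ NI := by
    rw [hNI, NI_eq]
    calc LL c g n = 1 * LL c g n := by ring
      _ ≤ Fintype.card (Cores c n) * LL c g n :=
          Nat.mul_le_mul_right _ (cores_pos c n)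
  have hper : ∀ TA ∈ pairs,
      ((OmegaF c g n).filter (fun F => ∀ j : Fin (LL c g n), ¬ (F (TA.1, j) ⊆ TA.2))).card
        * 2^(2*c*n) ≤ P ^ NI := by
    intro TA hTA
    rw [hpairs, Finset.mem_filter] at hTA
    have hA : n ≤ TA.2.card * 2^(c-1) := hTA.2
    have h1 := card_badH_pair c g n TA.1 TA.2
    set G₀ := ((PadsF c g n).filter (fun R => R ⊆ TA.2)).card with hG₀
    set X := ((PadsF c g n).filter (fun R => ¬ R ⊆ TA.2)).card with hX
    have hGX : G₀ + X = P := by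
      have := Finset.card_filter_add_card_filter_not
        (s := PadsF c g n) (fun R => R ⊆ TA.2)
      rw [card_PadsF] at this
      exact this
    have hratio : P ≤ mm c g * G₀ := by
      rw [hG₀, G0_eq]
      exact ratio_le c g n hc1 hA hnp
    have hmm1 : 1 ≤ mm c g := Nat.one_le_two_pow
    have h2 : 2 * X^(mm c g) ≤ P^(mm c g) := by
      have hXG : X + G₀ = P := by rw [Nat.add_comm]; exact hGX
      have harg : X + G₀ ≤ mm c g * G₀ := by rw [hXG]; exact hratio
      have ht := two_pow_le hmm1 harg
      rw [hXG] at ht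
      exact ht
    have h3 : X^(LL c g n) * 2^(2*c*n) ≤ P^(LL c g n) := by
      rw [LL]
      rw [pow_mul X (mm c g) (2*c*n), pow_mul P (mm c g) (2*c*n)]
      calc (X^(mm c g))^(2*c*n) * 2^(2*c*n) = (2 * X^(mm c g))^(2*c*n) := by
            rw [mul_pow]; ring
        _ ≤ (P^(mm c g))^(2*c*n) := Nat.pow_le_pow_left h2 _
    calc ((OmegaF c g n).filter
          (fun F => ∀ j : Fin (LL c g n), ¬ (F (TA.1, j) ⊆ TA.2))).card * 2^(2*c*n)
        ≤ (X ^ (LL c g n) * P ^ (NI - LL c g n)) * 2^(2*c*n) :=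
          Nat.mul_le_mul_right _ h1
      _ = (X^(LL c g n) * 2^(2*c*n)) * P^(NI - LL c g n) := by ring
      _ ≤ P^(LL c g n) * P^(NI - LL c g n) := Nat.mul_le_mul_right _ h3
      _ = P^NI := by rw [← pow_add, Nat.add_sub_cancel' hLNI]
  have hpairscard : pairs.card ≤ Fintype.card (Cores c n) * 2^n := by
    calc pairs.card ≤ (Finset.univ : Finset (Cores c n × Finset (Fin n))).card :=
          Finset.card_le_card (Finset.filter_subset _ _)
      _ = Fintype.card (Cores c n × Finset (Fin n)) := Finset.card_univ
      _ = Fintype.card (Cores c n) * 2^n := by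
          rw [Fintype.card_prod, Fintype.card_finset, Fintype.card_fin]
  calc (BadH c g n).card * 2^(2*c*n)
      ≤ (pairs.biUnion (fun TA => (OmegaF c g n).filter
          (fun F => ∀ j : Fin (LL c g n), ¬ (F (TA.1, j) ⊆ TA.2)))).card * 2^(2*c*n) :=
        Nat.mul_le_mul_right _ (Finset.card_le_card hsub)
    _ ≤ (∑ TA ∈ pairs, ((OmegaF c g n).filter
          (fun F => ∀ j : Fin (LL c g n), ¬ (F (TA.1, j) ⊆ TA.2))).card) * 2^(2*c*n) :=
        Nat.mul_le_mul_right _ Finset.card_biUnion_le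
    _ = ∑ TA ∈ pairs, ((OmegaF c g n).filter
          (fun F => ∀ j : Fin (LL c g n), ¬ (F (TA.1, j) ⊆ TA.2))).card * 2^(2*c*n) := by
        rw [Finset.sum_mul]
    _ ≤ ∑ _TA ∈ pairs, P ^ NI := Finset.sum_le_sum hper
    _ = pairs.card * P^NI := by rw [Finset.sum_const, smul_eq_mul]
    _ ≤ (Fintype.card (Cores c n) * 2^n) * P^NI := Nat.mul_le_mul_right _ hpairscard

lemma exists_good (hL : 1 ≤ LL c g n) (hc1 : 1 ≤ c)
    (hnp : 2^(c+1) * pp c g ≤ n)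
    (h1 : 4 * (g * (Fintype.card (Idx c g n))^(g-1)) ≤ n.choose (pp c g))
    (h2 : 4 * (Fintype.card (Cores c n) * 2^n) ≤ 2^(2*c*n)) :
    ∃ F ∈ OmegaF c g n, F ∉ BadG c g n ∧ F ∉ BadH c g n := by
  classical
  set P := n.choose (pp c g) with hP
  set NI := Fintype.card (Idx c g n) with hNI
  have hNI1 : 1 ≤ NI := NI_pos c g n hL
  have hppn : pp c g ≤ n := by
    have h0 : pp c g ≤ 2^(c+1) * pp c g := Nat.le_mul_of_pos_left _ (by positivity)
    omega
  have hP0 : 0 < P := Nat.choose_pos hppn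
  have hΩ : (OmegaF c g n).card = P ^ NI := card_OmegaF c g n
  have hG4 : 4 * (BadG c g n).card ≤ P ^ NI := by
    have hb := badG_card c g n hL
    calc 4 * (BadG c g n).card ≤ 4 * (g * NI^(g-1) * P^(NI-1)) := Nat.mul_le_mul_left _ hb
      _ = (4 * (g * NI^(g-1))) * P^(NI-1) := by ring
      _ ≤ P * P^(NI-1) := Nat.mul_le_mul_right _ h1
      _ = P^((NI-1)+1) := (pow_succ' P (NI-1)).symm
      _ = P^NI := by congr 1; omega
  have hH4 : 4 * (BadH c g n).card ≤ P ^ NI := by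
    have hb := badH_card c g n hc1 hnp
    have h4 : (4 * (BadH c g n).card) * 2^(2*c*n) ≤ P^NI * 2^(2*c*n) := by
      calc (4 * (BadH c g n).card) * 2^(2*c*n)
          = 4 * ((BadH c g n).card * 2^(2*c*n)) := by ring
        _ ≤ 4 * ((Fintype.card (Cores c n) * 2^n) * P^NI) := Nat.mul_le_mul_left _ hb
        _ = (4 * (Fintype.card (Cores c n) * 2^n)) * P^NI := by ring
        _ ≤ 2^(2*c*n) * P^NI := Nat.mul_le_mul_right _ h2
        _ = P^NI * 2^(2*c*n) := by ring
    exact Nat.le_of_mul_le_mul_right h4 (by positivity)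
  have hPNI : 0 < P^NI := by positivity
  have hunion : ((BadG c g n) ∪ (BadH c g n)).card < (OmegaF c g n).card := by
    have hle : ((BadG c g n) ∪ (BadH c g n)).card ≤ (BadG c g n).card + (BadH c g n).card :=
      Finset.card_union_le _ _
    rw [hΩ]
    omega
  have hnotsub : ¬ (OmegaF c g n ⊆ BadG c g n ∪ BadH c g n) := by
    intro hsub'
    have h5 := Finset.card_le_card hsub'
    omega
  obtain ⟨F, hF, hFn⟩ := Finset.not_subset.mp hnotsub
  rw [Finset.mem_union] at hFn
  push_neg at hFn
  exact ⟨F, hF, hFn⟩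

theorem main (hc : 2 ≤ c) (hg : 2 ≤ g)
    (hL : 1 ≤ LL c g n)
    (hnp : 2^(c+1) * pp c g ≤ n)
    (h1 : 4 * (g * (Fintype.card (Idx c g n))^(g-1)) ≤ n.choose (pp c g))
    (h2 : 4 * (Fintype.card (Cores c n) * 2^n) ≤ 2^(2*c*n))
    (h4 : g * (c + pp c g) < n) :
    ∃ Z : Set (Fin n → ZMod 2),
      (∀ S : Finset (Fin n → ZMod 2), ↑S ⊆ Z → S.Nonempty → S.card < g →
        LinearIndependent (ZMod 2) (fun x : {x : Fin n → ZMod 2 // x ∈ S} => (x : Fin n → ZMod 2))) ∧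
      (∀ W : Submodule (ZMod 2) (Fin n → ZMod 2),
        Module.finrank (ZMod 2) W + (c - 1) = n → (Z ∩ ↑W).Nonempty) ∧
      (∀ z ∈ Z, n - 2 * c * g ≤ hWt z) := by
  classical
  obtain ⟨F, hFΩ, hFG, hFH⟩ := exists_good c g n hL (by omega) hnp h1 h2
  have hFpads : ∀ i : Idx c g n, (F i).card = pp c g := by
    intro i
    have hmem := Fintype.mem_piFinset.mp hFΩ i
    rw [PadsF, Finset.mem_powersetCard] at hmem
    exact hmem.2
  have hppeven : pp c g % 2 = 0 := by
    have : pp c g = 2 * (c * (g-1)) := by rw [pp]; ring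
    omega
  refine ⟨Set.range (zOf c g n F), ?_, ?_, ?_⟩
  · -- girth
    intro S hSZ hSne hScard
    apply li_of_sums
    intro Q hQS hQne hQ0
    have hmemz : ∀ x ∈ Q, ∃ i : Idx c g n, zOf c g n F i = x := by
      intro x hx
      exact Set.mem_range.mp (hSZ (hQS hx))
    set ch : {x // x ∈ Q} → Idx c g n := fun x => (hmemz x.1 x.2).choose with hch
    have hchspec : ∀ x : {x // x ∈ Q}, zOf c g n F (ch x) = x.1 :=
      fun x => (hmemz x.1 x.2).choose_spec
    set J : Finset (Idx c g n) := Q.attach.image ch with hJ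
    have hinj : ∀ x ∈ Q.attach, ∀ y ∈ Q.attach, ch x = ch y → x = y := by
      intro x _ y _ hxy
      have hxy2 : x.1 = y.1 := by rw [← hchspec x, ← hchspec y, hxy]
      exact Subtype.ext hxy2
    have hJcard : J.card = Q.card := by
      rw [hJ, Finset.card_image_of_injOn (fun x hx y hy => hinj x hx y hy), Finset.card_attach]
    have hsvec : ∀ x : {x // x ∈ Q}, svec c g n F (ch x) = x.1 + 1 := by
      intro x
      have h := hchspec x
      rw [zOf] at h
      calc svec c g n F (ch x) = (1 + 1) + svec c g n F (ch x) := by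
            rw [add_self_eq_zero' (1 : Fin n → ZMod 2), zero_add]
        _ = 1 + (1 + svec c g n F (ch x)) := by rw [add_assoc]
        _ = 1 + x.1 := by rw [h]
        _ = x.1 + 1 := by rw [add_comm]
    have hJsum : ∑ i ∈ J, svec c g n F i
        = (∑ x ∈ Q, x) + Q.card • (1 : Fin n → ZMod 2) := by
      rw [hJ, Finset.sum_image hinj]
      calc ∑ x ∈ Q.attach, svec c g n F (ch x)
          = ∑ x ∈ Q.attach, (x.1 + 1) := Finset.sum_congr rfl (fun x _ => hsvec x)
        _ = (∑ x ∈ Q.attach, x.1) + ∑ _x ∈ Q.attach, (1 : Fin n → ZMod 2) := by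
            rw [Finset.sum_add_distrib]
        _ = (∑ x ∈ Q, x) + Q.card • (1 : Fin n → ZMod 2) := by
            rw [Finset.sum_attach Q (fun x => x), Finset.sum_const, Finset.card_attach]
    rcases Nat.even_or_odd Q.card with hpar | hpar
    · -- even cardinality: contradicts F ∉ BadG
      have hzero : ∑ i ∈ J, svec c g n F i = 0 := by
        rw [hJsum, hQ0, zero_add]
        exact even_nsmul_eq_zero (Nat.even_iff.mp hpar) _
      have hQ1 : 1 ≤ Q.card := Finset.card_pos.mpr hQne
      have hQ2 : 2 ≤ Q.card := by
        rcases hpar with ⟨t, ht⟩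
        omega
      have hQg : Q.card < g := lt_of_le_of_lt (Finset.card_le_card hQS) hScard
      refine hFG ?_
      rw [BadG, Finset.mem_filter]
      exact ⟨hFΩ, J, by omega, by omega, hzero⟩
    · -- odd cardinality: evaluate at a fresh coordinate
      set U : Finset (Fin n) := J.biUnion (fun i => i.1.1 ∪ F i) with hU
      have hUcard : U.card < n := by
        have hh1 : U.card ≤ ∑ i ∈ J, (i.1.1 ∪ F i).card := Finset.card_biUnion_le
        have hh2 : ∀ i ∈ J, (i.1.1 ∪ F i).card ≤ c + pp c g := by
          intro i _
          calc (i.1.1 ∪ F i).card ≤ i.1.1.card + (F i).card := Finset.card_union_le _ _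
            _ ≤ (c-1) + pp c g := add_le_add i.1.2 (le_of_eq (hFpads i))
            _ ≤ c + pp c g := by omega
        have hh3 : ∑ i ∈ J, (i.1.1 ∪ F i).card ≤ J.card * (c + pp c g) := by
          calc ∑ i ∈ J, (i.1.1 ∪ F i).card ≤ ∑ _i ∈ J, (c + pp c g) :=
              Finset.sum_le_sum hh2
            _ = J.card * (c + pp c g) := by rw [Finset.sum_const, smul_eq_mul]
        have hh4 : J.card ≤ g := by
          have := lt_of_le_of_lt (Finset.card_le_card hQS) hScard
          omega
        have hh5 : J.card * (c + pp c g) ≤ g * (c + pp c g) :=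
          Nat.mul_le_mul_right _ hh4
        omega
      obtain ⟨jstar, hjstar⟩ : ∃ j : Fin n, j ∉ U := by
        by_contra hall
        push_neg at hall
        have hsub3 : (Finset.univ : Finset (Fin n)) ⊆ U := fun j _ => hall j
        have := Finset.card_le_card hsub3
        rw [Finset.card_univ, Fintype.card_fin] at this
        omega
      have heval : (∑ x ∈ Q, x) jstar = 1 := by
        rw [Finset.sum_apply]
        rw [← Finset.sum_attach Q (fun x => x jstar)]
        have hone : ∀ x ∈ Q.attach, x.1 jstar = 1 := by
          intro x _
          have hxJ : ch x ∈ J := by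
            rw [hJ]
            exact Finset.mem_image.mpr ⟨x, Finset.mem_attach _ _, rfl⟩
          have hjT : jstar ∉ (ch x).1.1 := by
            intro hmem'
            exact hjstar (Finset.mem_biUnion.mpr ⟨ch x, hxJ, Finset.mem_union_left _ hmem'⟩)
          have hjR : jstar ∉ F (ch x) := by
            intro hmem'
            exact hjstar (Finset.mem_biUnion.mpr ⟨ch x, hxJ, Finset.mem_union_right _ hmem'⟩)
          rw [← hchspec x, zOf, svec]
          simp [Pi.add_apply, vec_apply, hjT, hjR]
        rw [Finset.sum_congr rfl hone, Finset.sum_const, Finset.card_attach]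
        rw [nsmul_eq_mul, mul_one]
        have hm2 : Q.card % 2 = 1 := Nat.odd_iff.mp hpar
        calc (Q.card : ZMod 2) = ((Q.card % 2 : ℕ) : ZMod 2) := (ZMod.natCast_mod _ _).symm
          _ = ((1 : ℕ) : ZMod 2) := by rw [hm2]
          _ = 1 := Nat.cast_one
      rw [hQ0] at heval
      simp at heval
  · -- hitting
    intro W hW
    letI : Fintype ((Fin n → ZMod 2) ⧸ W) := Fintype.ofFinite _
    have hrk : Module.finrank (ZMod 2) ((Fin n → ZMod 2) ⧸ W)
        + Module.finrank (ZMod 2) W = n := by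
      have hq := Submodule.finrank_quotient_add_finrank W
      rw [Module.finrank_fintype_fun_eq_card, Fintype.card_fin] at hq
      exact hq
    have hrkQ : Module.finrank (ZMod 2) ((Fin n → ZMod 2) ⧸ W) = c - 1 := by omega
    set σ := W.mkQ with hσ
    set eQ : Fin n → ((Fin n → ZMod 2) ⧸ W) := fun i => σ (Pi.single i 1) with heQ
    have hone : (1 : Fin n → ZMod 2) = ∑ i, Pi.single i 1 :=
      (Finset.univ_sum_single (fun _ : Fin n => (1 : ZMod 2))).symm
    have hs1 : σ 1 = ∑ i, eQ i := by
      rw [heQ]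
      conv_lhs => rw [hone]
      rw [map_sum]
    have hsmem : σ 1 ∈ Submodule.span (ZMod 2) (Set.range eQ) := by
      rw [hs1]
      exact Submodule.sum_mem _ (fun i _ => Submodule.subset_span ⟨i, rfl⟩)
    obtain ⟨T₀, hT₀card, hT₀sum⟩ := exists_small_rep eQ (σ 1) hsmem
    rw [hrkQ] at hT₀card
    set Tc : Cores c n := ⟨T₀, hT₀card⟩ with hTc
    have hcardQt : Fintype.card ((Fin n → ZMod 2) ⧸ W) = 2^(c-1) := by
      have b := Module.finBasis (ZMod 2) ((Fin n → ZMod 2) ⧸ W)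
      rw [hrkQ] at b
      calc Fintype.card ((Fin n → ZMod 2) ⧸ W)
          = Fintype.card (Fin (c-1) → ZMod 2) := Fintype.card_congr b.equivFun.toEquiv
        _ = 2^(c-1) := by rw [Fintype.card_fun, Fintype.card_fin, ZMod.card 2]
    obtain ⟨v, hv⟩ : ∃ v : ((Fin n → ZMod 2) ⧸ W),
        n ≤ (Finset.univ.filter (fun i : Fin n => eQ i = v)).card * 2^(c-1) := by
      by_contra hno
      push_neg at hno
      have hsum := Finset.card_eq_sum_card_fiberwise
        (f := eQ) (s := (Finset.univ : Finset (Fin n)))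
        (t := (Finset.univ : Finset ((Fin n → ZMod 2) ⧸ W)))
        (fun x _ => Finset.mem_univ _)
      rw [Finset.card_univ, Fintype.card_fin] at hsum
      have hmul : n * 2^(c-1) = ∑ w ∈ (Finset.univ : Finset ((Fin n → ZMod 2) ⧸ W)),
          (Finset.univ.filter (fun i : Fin n => eQ i = w)).card * 2^(c-1) := by
        rw [← Finset.sum_mul, ← hsum]
      have hlt : ∑ w ∈ (Finset.univ : Finset ((Fin n → ZMod 2) ⧸ W)),
          (Finset.univ.filter (fun i : Fin n => eQ i = w)).card * 2^(c-1)
          ≤ ∑ _w ∈ (Finset.univ : Finset ((Fin n → ZMod 2) ⧸ W)), (n-1) := by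
        refine Finset.sum_le_sum (fun w _ => ?_)
        have := hno w
        omega
      rw [Finset.sum_const, smul_eq_mul, Finset.card_univ, hcardQt] at hlt
      set y := (2:ℕ)^(c-1) with hy
      have hy1 : 1 ≤ y := Nat.one_le_two_pow
      have hn1 : 1 ≤ n := by
        have hp1 : 1 ≤ pp c g := by
          rw [pp]
          have : 1 ≤ g - 1 := by omega
          have : 1*1*1 ≤ 2*c*(g-1) := by
            exact Nat.mul_le_mul (Nat.mul_le_mul (by omega) (by omega)) (by omega)
          omega
        omega
      have hfin : y * (n-1) + y = n * y := by
        rw [← Nat.mul_succ, Nat.mul_comm]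
        congr 1
        omega
      omega
    set A := Finset.univ.filter (fun i : Fin n => eQ i = v) with hAdef
    have hnex : ¬ ∃ TA : Cores c n × Finset (Fin n),
        n ≤ TA.2.card * 2^(c-1) ∧ ∀ j : Fin (LL c g n), ¬ (F (TA.1, j) ⊆ TA.2) := by
      intro hex
      exact hFH (by rw [BadH, Finset.mem_filter]; exact ⟨hFΩ, hex⟩)
    push_neg at hnex
    obtain ⟨j, hjsub⟩ := hnex (Tc, A) hv
    set R := F (Tc, j) with hRdef
    set z := zOf c g n F (Tc, j) with hzdef
    have hσz : σ z = 0 := by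
      rw [hzdef, zOf, svec]
      rw [map_add, map_add]
      have hvt : σ (vec T₀) = ∑ i ∈ T₀, eQ i := by rw [vec, map_sum]
      have hvr : σ (vec (F (Tc, j))) = ∑ i ∈ F (Tc, j), eQ i := by rw [vec, map_sum]
      have hRv : ∑ i ∈ F (Tc, j), eQ i = 0 := by
        have hconst : ∀ i ∈ F (Tc, j), eQ i = v := by
          intro i hi
          have hiA : i ∈ A := hjsub hi
          rw [hAdef, Finset.mem_filter] at hiA
          exact hiA.2
        rw [Finset.sum_congr rfl hconst, Finset.sum_const]
        refine even_nsmul_eq_zero ?_ v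
        rw [hFpads (Tc, j)]
        exact hppeven
      have hTeq : (Tc : Cores c n).1 = T₀ := rfl
      rw [hvt, hvr, hRv, hT₀sum, add_zero]
      exact add_self_eq_zero' _
    have hzW : z ∈ W := by
      have : W.mkQ z = 0 := hσz
      rw [Submodule.mkQ_apply] at this
      exact (Submodule.Quotient.mk_eq_zero W).mp this
    exact ⟨z, ⟨⟨(Tc, j), rfl⟩, hzW⟩⟩
  · -- weight
    intro z hz
    obtain ⟨i, rfl⟩ := hz
    have hsupp : ∀ j : Fin n, j ∉ i.1.1 → j ∉ F i → zOf c g n F i j = 1 := by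
      intro j hjT hjR
      rw [zOf, svec]
      simp [Pi.add_apply, vec_apply, hjT, hjR]
    have hTR : (i.1.1 ∪ F i).card ≤ 2*c*g := by
      have hu : (i.1.1 ∪ F i).card ≤ (c-1) + pp c g :=
        le_trans (Finset.card_union_le _ _) (add_le_add i.1.2 (le_of_eq (hFpads i)))
      obtain ⟨g', rfl⟩ := Nat.exists_eq_add_of_le hg
      have e0 : 2 + g' - 1 = 1 + g' := by omega
      set u := c * g' with hudef
      have e1 : pp c (2+g') = 2*c + 2*u := by
        rw [pp, e0, hudef]
        ring
      have e2 : 2*c*(2+g') = 4*c + 2*u := by rw [hudef]; ring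
      omega
    have hcard1 : n - 2*c*g ≤ (Finset.univ \ (i.1.1 ∪ F i)).card := by
      rw [Finset.card_sdiff_of_subset (Finset.subset_univ _), Finset.card_univ, Fintype.card_fin]
      omega
    show n - 2*c*g ≤ hWt (zOf c g n F i)
    unfold hWt
    refine le_trans hcard1 (Finset.card_le_card ?_)
    intro j hj
    rw [Finset.mem_sdiff, Finset.mem_union] at hj
    push_neg at hj
    rw [Finset.mem_filter]
    refine ⟨Finset.mem_univ _, ?_⟩
    rw [hsupp j hj.2.1 hj.2.2]
    exact one_ne_zero

lemma card_cores_le (hc1 : 1 ≤ c) (hn1 : 1 ≤ n) :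
    Fintype.card (Cores c n) ≤ c * n^(c-1) := by
  classical
  rw [Fintype.card_subtype]
  have hsub : (Finset.univ.filter (fun T : Finset (Fin n) => T.card ≤ c - 1))
      ⊆ (Finset.range c).biUnion (fun k => Finset.univ.powersetCard k) := by
    intro T hT
    rw [Finset.mem_filter] at hT
    rw [Finset.mem_biUnion]
    refine ⟨T.card, ?_, ?_⟩
    · rw [Finset.mem_range]; omega
    · rw [Finset.mem_powersetCard]; exact ⟨Finset.subset_univ _, rfl⟩
  refine (Finset.card_le_card hsub).trans ?_
  refine (Finset.card_biUnion_le).trans ?_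
  have hterm : ∀ k ∈ Finset.range c,
      ((Finset.univ : Finset (Fin n)).powersetCard k).card ≤ n^(c-1) := by
    intro k hk
    rw [Finset.mem_range] at hk
    rw [Finset.card_powersetCard, Finset.card_univ, Fintype.card_fin]
    calc n.choose k ≤ n^k := Nat.choose_le_pow n k
      _ ≤ n^(c-1) := Nat.pow_le_pow_right hn1 (by omega)
  calc ∑ k ∈ Finset.range c, ((Finset.univ : Finset (Fin n)).powersetCard k).card
      ≤ ∑ _k ∈ Finset.range c, n^(c-1) := Finset.sum_le_sum hterm
    _ = c * n^(c-1) := by rw [Finset.sum_const, smul_eq_mul, Finset.card_range]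

lemma NI_le (hc1 : 1 ≤ c) (hn1 : 1 ≤ n) :
    Fintype.card (Idx c g n) ≤ (2*c^2*mm c g) * n^c := by
  rw [NI_eq]
  calc Fintype.card (Cores c n) * LL c g n
      ≤ (c * n^(c-1)) * (mm c g * (2*c*n)) :=
        Nat.mul_le_mul (card_cores_le c n hc1 hn1) (le_of_eq rfl)
    _ = (2*c^2*mm c g) * (n^(c-1) * n) := by ring
    _ = (2*c^2*mm c g) * n^c := by
        have hpowc : n^(c-1) * n = n^c := by
          rw [← pow_succ]
          congr 1
          omega
        rw [hpowc]

lemma h1_of_large (hc : 2 ≤ c) (hg : 2 ≤ g) (hn1 : 1 ≤ n)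
    (hn2p : 2 * pp c g ≤ n)
    (hnK : (4*g*(2*c^2*mm c g)^(g-1)) * (Nat.factorial (pp c g) * 2^(pp c g)) ≤ n) :
    4 * (g * (Fintype.card (Idx c g n))^(g-1)) ≤ n.choose (pp c g) := by
  set p := pp c g with hp
  set e := c * (g-1) with he
  have hpe : p = e + e := by rw [hp, he, pp]; ring
  have he1 : 1 ≤ e := by
    have h9 : 1*1 ≤ c * (g-1) := Nat.mul_le_mul (by omega) (by omega)
    omega
  set K1 := 4*g*(2*c^2*mm c g)^(g-1) with hK1
  set D := Nat.factorial p * 2^p with hD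
  have hD1 : 1 ≤ D := by
    rw [hD]
    have := Nat.factorial_pos p
    have : (0:ℕ) < 2^p := by positivity
    exact Nat.mul_pos (Nat.factorial_pos p) this
  have hA : 4 * (g * (Fintype.card (Idx c g n))^(g-1)) ≤ K1 * n^e := by
    have hNI := NI_le c g n (by omega) hn1
    calc 4 * (g * (Fintype.card (Idx c g n))^(g-1))
        ≤ 4 * (g * ((2*c^2*mm c g) * n^c)^(g-1)) :=
          Nat.mul_le_mul_left _ (Nat.mul_le_mul_left _ (Nat.pow_le_pow_left hNI _))
      _ = K1 * (n^c)^(g-1) := by rw [hK1, mul_pow]; ring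
      _ = K1 * n^e := by rw [← pow_mul, he]
  have hB : (K1 * n^e) * D ≤ n^p := by
    have hKD : K1 * D ≤ n := hnK
    have hnne : n ≤ n^e := Nat.le_self_pow (by omega) n
    calc (K1 * n^e) * D = (K1 * D) * n^e := by ring
      _ ≤ n * n^e := Nat.mul_le_mul_right _ hKD
      _ ≤ n^e * n^e := Nat.mul_le_mul_right _ hnne
      _ = n^p := by rw [hpe, pow_add]
  have hC : n^p ≤ (n+1-p)^p * 2^p := by
    have h2np : n ≤ 2 * (n+1-p) := by omega
    calc n^p ≤ (2*(n+1-p))^p := Nat.pow_le_pow_left h2np p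
      _ = (n+1-p)^p * 2^p := by rw [mul_pow]; ring
  have hppn : p ≤ n := by omega
  have hDd : (n+1-p)^p ≤ Nat.factorial p * n.choose p := by
    calc (n+1-p)^p ≤ n.descFactorial p := pow_le_descFactorial hppn
      _ = Nat.factorial p * n.choose p := Nat.descFactorial_eq_factorial_mul_choose n p
  have hfinal : (4 * (g * (Fintype.card (Idx c g n))^(g-1))) * D ≤ (n.choose p) * D := by
    calc (4 * (g * (Fintype.card (Idx c g n))^(g-1))) * D
        ≤ (K1 * n^e) * D := Nat.mul_le_mul_right _ hA
      _ ≤ n^p := hB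
      _ ≤ (n+1-p)^p * 2^p := hC
      _ ≤ (Nat.factorial p * n.choose p) * 2^p := Nat.mul_le_mul_right _ hDd
      _ = (n.choose p) * D := by rw [hD]; ring
  exact Nat.le_of_mul_le_mul_right hfinal (by omega)

lemma h2_of_large (hc : 2 ≤ c) (hn1 : 1 ≤ n) (hpoly : 4*c * (n+1)^c ≤ 2^n) :
    4 * (Fintype.card (Cores c n) * 2^n) ≤ 2^(2*c*n) := by
  have hcc := card_cores_le c n (by omega) hn1
  have hplus : n^(c-1) ≤ (n+1)^c :=
    (Nat.pow_le_pow_left (by omega) _).trans (Nat.pow_le_pow_right (by omega) (by omega))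
  have h2n : n + n ≤ 2*c*n := by
    have h9 := Nat.mul_le_mul_right n (show 2 ≤ 2*c by omega)
    omega
  calc 4 * (Fintype.card (Cores c n) * 2^n)
      = (4 * Fintype.card (Cores c n)) * 2^n := by ring
    _ ≤ (4 * (c * (n+1)^c)) * 2^n := by
        refine Nat.mul_le_mul_right _ (Nat.mul_le_mul_left _ ?_)
        exact hcc.trans (Nat.mul_le_mul_left _ hplus)
    _ = (4*c*(n+1)^c) * 2^n := by ring
    _ ≤ 2^n * 2^n := Nat.mul_le_mul_right _ hpoly
    _ = 2^(n+n) := by rw [← pow_add]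
    _ ≤ 2^(2*c*n) := Nat.pow_le_pow_right (by norm_num) h2n

end Core
end S7

theorem stmt_7 (c g : ℕ) (hc : 2 ≤ c) (hg : 2 ≤ g) :
    ∃ N : ℕ, ∀ n ≥ N, ∃ Z : Set (Fin n → ZMod 2),
      (∀ S : Finset (Fin n → ZMod 2), ↑S ⊆ Z → S.Nonempty → S.card < g →
        LinearIndependent (ZMod 2) (fun x : {x : Fin n → ZMod 2 // x ∈ S} => (x : Fin n → ZMod 2))) ∧
      (∀ W : Submodule (ZMod 2) (Fin n → ZMod 2),
        Module.finrank (ZMod 2) W + (c - 1) = n → (Z ∩ ↑W).Nonempty) ∧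
      (∀ z ∈ Z, n - 2 * c * g ≤ hWt z) := by
  classical
  obtain ⟨N2, hN2⟩ := S7.poly_le_two_pow (4*c) c
  set p := S7.pp c g with hp
  set K2 := (4*g*(2*c^2*S7.mm c g)^(g-1)) * (Nat.factorial p * 2^p) with hK2
  refine ⟨(2^(c+1)*p + 1) + (g*(c+p) + 1) + (K2 + 2*p + 2) + (N2 + 1), fun n hn => ?_⟩
  have hn1 : 1 ≤ n := by omega
  have hnp : 2^(c+1) * p ≤ n := by omega
  have h4 : g * (c + p) < n := by omega
  have hn2p : 2 * p ≤ n := by omega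
  have hnK : K2 ≤ n := by omega
  have hL : 1 ≤ S7.LL c g n := by
    rw [S7.LL]
    have hm1 : 1 ≤ S7.mm c g := Nat.one_le_two_pow
    have hc0 : 0 < c := by omega
    have hn0 : 0 < n := by omega
    have h2cn : 0 < 2*c*n := by positivity
    exact Nat.mul_pos hm1 h2cn
  have h1 := S7.h1_of_large c g n hc hg hn1 hn2p hnK
  have h2 := S7.h2_of_large c n hc hn1 (hN2 n (by omega))
  exact S7.main c g n hc hg hL hnp h1 h2 h4
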